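/- Let G=(V,E) be a finite simple graph. Then G ⊕ K₂ is the contact graph of a 3-dimensional sphere packing if and only if G is a penny graph. -/

import Mathlib

open Real RealInnerProductSpace Module

set_option linter.unreachableTactic false
set_option linter.unusedTactic false
set_option linter.deprecated false

noncomputable section

/-- A `d`-dimensional sphere packing with contact graph `G`, centres `p` and radii `r`:
the spheres have disjoint interiors and two spheres touch iff the vertices are adjacent. -/
def IsSpherePacking {V : Type*} (d : ℕ) (G : SimpleGraph V)
    (p : V → EuclideanSpace ℝ (Fin d)) (r : V → ℝ) : Prop :=
  (∀ v, 0 < r v) ∧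
  ∀ v w : V, v ≠ w →
    r v + r w ≤ dist (p v) (p w) ∧ (dist (p v) (p w) = r v + r w ↔ G.Adj v w)

/-- The join `G ⊕ K₂` of `G` with the complete graph on two new vertices
(the two elements of `Fin 2`). -/
def joinK2 {V : Type*} (G : SimpleGraph V) : SimpleGraph (V ⊕ Fin 2) where
  Adj x y :=
    match x, y with
    | Sum.inl u, Sum.inl v => G.Adj u v
    | Sum.inl _, Sum.inr _ => True
    | Sum.inr _, Sum.inl _ => True
    | Sum.inr i, Sum.inr j => i ≠ j
  symm := ⟨by
    rintro (u | i) (v | j) h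
    · exact h.symm
    · trivial
    · trivial
    · exact h.symm⟩
  loopless := ⟨by
    rintro (u | i) h
    · exact G.irrefl h
    · exact h rfl⟩

/-- A penny graph: realisable as the contact graph of unit circles in the plane. -/
def IsPennyGraph {V : Type*} (G : SimpleGraph V) : Prop :=
  ∃ q : V → EuclideanSpace ℝ (Fin 2),
    ∀ v w : V, v ≠ w → 2 ≤ dist (q v) (q w) ∧ (dist (q v) (q w) = 2 ↔ G.Adj v w)

section Helpers

lemma my_sq_eq_iff {a b : ℝ} (ha : 0 ≤ a) (hb : 0 ≤ b) : a = b ↔ a ^ 2 = b ^ 2 := by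
  constructor
  · rintro rfl; rfl
  · intro h; nlinarith

lemma my_sqrt_eq_iff {s t : ℝ} (hs : 0 ≤ s) (ht : 0 ≤ t) :
    Real.sqrt s = t ↔ s = t ^ 2 :=
  ⟨fun h => by rw [← h, Real.sq_sqrt hs], fun h => by rw [h, Real.sqrt_sq ht]⟩

lemma key_ident {E : Type*} [NormedAddCommGroup E] [InnerProductSpace ℝ E]
    (u u' : E) (r r' D D' : ℝ) (hD : ‖u‖ ^ 2 = D + r ^ 2) (hD' : ‖u'‖ ^ 2 = D' + r' ^ 2)
    (h1 : D ≠ 0) (h2 : D' ≠ 0) :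
    ‖D⁻¹ • u - D'⁻¹ • u'‖ ^ 2
      = (‖u - u'‖ ^ 2 - (r + r') ^ 2) / (D * D') + (r / D + r' / D') ^ 2 := by
  have e1 := norm_sub_sq_real (D⁻¹ • u) (D'⁻¹ • u')
  have n1 : ‖D⁻¹ • u‖ ^ 2 = D⁻¹ ^ 2 * ‖u‖ ^ 2 := by
    rw [norm_smul, Real.norm_eq_abs, mul_pow, sq_abs]
  have n2 : ‖D'⁻¹ • u'‖ ^ 2 = D'⁻¹ ^ 2 * ‖u'‖ ^ 2 := by
    rw [norm_smul, Real.norm_eq_abs, mul_pow, sq_abs]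
  have i1 : ⟪D⁻¹ • u, D'⁻¹ • u'⟫ = D⁻¹ * D'⁻¹ * ⟪u, u'⟫ := by
    rw [real_inner_smul_left, real_inner_smul_right]; ring
  have e2 := norm_sub_sq_real u u'
  have hI : ⟪u, u'⟫ = (D + r ^ 2 + (D' + r' ^ 2) - ‖u - u'‖ ^ 2) / 2 := by
    rw [← hD, ← hD']; linarith
  rw [e1, n1, n2, i1, hI, hD, hD']
  field_simp
  ring


set_option maxHeartbeats 1000000 in
lemma penny_key (A B A' B' D D' : ℝ) (hD : D = A^2+B^2-1) (hD' : D' = A'^2+B'^2-1)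
    (h1 : D ≠ 0) (h2 : D' ≠ 0) :
    (A/D - A'/D')^2 + (B/D - B'/D')^2
      = ((A-A')^2+(B-B')^2 - 4)/(D*D') + (1/D+1/D')^2 := by
  subst hD; subst hD'
  field_simp
  ring

lemma penny_base (A B D : ℝ) (hD : D = A^2+B^2-1) (h1 : D ≠ 0) :
    (A/D)^2 + (B/D)^2 + (1/2:ℝ)^2 = (1/D+1/2)^2 := by
  subst hD; field_simp; ring

lemma dist3 (x1 x2 x3 y1 y2 y3 : ℝ) :
    dist ((WithLp.equiv 2 (Fin 3 → ℝ)).symm ![x1,x2,x3])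
        ((WithLp.equiv 2 (Fin 3 → ℝ)).symm ![y1,y2,y3])
      = Real.sqrt ((x1-y1)^2 + (x2-y2)^2 + (x3-y3)^2) := by
  rw [EuclideanSpace.dist_eq]
  congr 1
  simp [Fin.sum_univ_three, Real.dist_eq, sq_abs]


lemma forward_dir {V : Type*} [Fintype V] (G : SimpleGraph V)
    (h : ∃ (p : V ⊕ Fin 2 → EuclideanSpace ℝ (Fin 3)) (r : V ⊕ Fin 2 → ℝ),
      IsSpherePacking 3 (joinK2 G) p r) : IsPennyGraph G := by
  classical
  obtain ⟨p, r, hrpos, hpack⟩ := h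
  have hra : 0 < r (Sum.inr 0) := hrpos _
  have hrb : 0 < r (Sum.inr 1) := hrpos _
  set ra := r (Sum.inr 0) with hra'
  set rb := r (Sum.inr 1) with hrb'
  have hrabpos : 0 < ra + rb := by linarith
  have hAB : dist (p (Sum.inr 0)) (p (Sum.inr 1)) = ra + rb :=
    (hpack _ _ (by simp)).2.mpr (show (0 : Fin 2) ≠ 1 by decide)
  have hBA : ‖p (Sum.inr 1) - p (Sum.inr 0)‖ = ra + rb := by
    rw [← dist_eq_norm, dist_comm]; exact hAB
  set n : EuclideanSpace ℝ (Fin 3) := (ra + rb)⁻¹ • (p (Sum.inr 1) - p (Sum.inr 0)) with hn_def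
  have hn : ‖n‖ = 1 := by
    rw [hn_def, norm_smul, Real.norm_eq_abs, abs_inv, abs_of_pos hrabpos, hBA]
    field_simp
  have hn0 : n ≠ 0 := by
    intro h0
    rw [h0, norm_zero] at hn
    norm_num at hn
  set t : EuclideanSpace ℝ (Fin 3) := p (Sum.inr 0) + ra • n with ht_def
  set u : V → EuclideanSpace ℝ (Fin 3) := fun v => p (Sum.inl v) - t with hu_def
  set D : V → ℝ := fun v => 4 * r (Sum.inl v) * ra * rb / (ra + rb) with hD_def
  have hDpos : ∀ v, 0 < D v := by
    intro v
    have := hrpos (Sum.inl v)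
    rw [hD_def]
    positivity
  -- tangency equations
  have htA : ∀ v, ‖u v‖ ^ 2 + 2 * ra * ⟪u v, n⟫ + ra ^ 2
      = (r (Sum.inl v) + ra) ^ 2 := by
    intro v
    have hvA : dist (p (Sum.inl v)) (p (Sum.inr 0)) = r (Sum.inl v) + ra :=
      (hpack _ _ (by simp)).2.mpr trivial
    have hsplit : p (Sum.inl v) - p (Sum.inr 0) = u v + ra • n := by
      rw [hu_def]; dsimp only; rw [ht_def]; abel
    have hexp := norm_add_sq_real (u v) (ra • n)
    rw [← hsplit, ← dist_eq_norm, hvA] at hexp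
    have hi : ⟪u v, ra • n⟫ = ra * ⟪u v, n⟫ := real_inner_smul_right _ _ _
    have hns : ‖ra • n‖ ^ 2 = ra ^ 2 := by
      rw [norm_smul, Real.norm_eq_abs, mul_pow, sq_abs, hn]; ring
    rw [hi, hns] at hexp
    linarith
  have htB : ∀ v, ‖u v‖ ^ 2 - 2 * rb * ⟪u v, n⟫ + rb ^ 2
      = (r (Sum.inl v) + rb) ^ 2 := by
    intro v
    have hvB : dist (p (Sum.inl v)) (p (Sum.inr 1)) = r (Sum.inl v) + rb :=
      (hpack _ _ (by simp)).2.mpr trivial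
    have hB : p (Sum.inr 1) = p (Sum.inr 0) + (ra + rb) • n := by
      rw [hn_def, smul_smul, mul_inv_cancel₀ hrabpos.ne', one_smul]
      abel
    have hsplit : p (Sum.inl v) - p (Sum.inr 1) = u v - rb • n := by
      rw [hu_def]; dsimp only; rw [ht_def, hB, add_smul]; abel
    have hexp := norm_sub_sq_real (u v) (rb • n)
    rw [← hsplit, ← dist_eq_norm, hvB] at hexp
    have hi : ⟪u v, rb • n⟫ = rb * ⟪u v, n⟫ := real_inner_smul_right _ _ _
    have hns : ‖rb • n‖ ^ 2 = rb ^ 2 := by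
      rw [norm_smul, Real.norm_eq_abs, mul_pow, sq_abs, hn]; ring
    rw [hi, hns] at hexp
    linarith
  have hDval : ∀ v, ‖u v‖ ^ 2 = D v + r (Sum.inl v) ^ 2 := by
    intro v
    have h1 := htA v
    have h2 := htB v
    have key : (ra + rb) * (‖u v‖ ^ 2 - r (Sum.inl v) ^ 2)
        = 4 * r (Sum.inl v) * ra * rb := by linear_combination rb * h1 + ra * h2
    rw [hD_def]
    dsimp only
    rw [eq_comm, div_add' _ _ _ hrabpos.ne', div_eq_iff hrabpos.ne']
    linear_combination (-1 : ℝ) * key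
  have hInner : ∀ v, ⟪u v, n⟫ = r (Sum.inl v) - D v / (2 * ra) := by
    intro v
    have h1 := htA v
    have h2 := hDval v
    have h3 : 2 * ra * ⟪u v, n⟫ = 2 * r (Sum.inl v) * ra - D v := by
      linear_combination h1 - h2
    rw [show r (Sum.inl v) - D v / (2 * ra)
        = (2 * r (Sum.inl v) * ra - D v) / (2 * ra) from by field_simp, ← h3,
      mul_div_cancel_left₀ _ (by positivity : (2 * ra : ℝ) ≠ 0)]
  set R : ℝ := (ra + rb) / (4 * ra * rb) with hR_def
  have hRpos : 0 < R := by rw [hR_def]; positivity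
  have hrD : ∀ v, r (Sum.inl v) / D v = R := by
    intro v
    rw [div_eq_iff (hDpos v).ne', hD_def, hR_def]
    dsimp only
    field_simp
  set H : ℝ := R - 1 / (2 * ra) with hH_def
  have hInner' : ∀ v, ⟪u v, n⟫ = H * D v := by
    intro v
    have hr_eq : r (Sum.inl v) = R * D v := by
      rw [← hrD v, div_mul_cancel₀ _ (hDpos v).ne']
    rw [hInner v, hH_def, hr_eq]
    ring
  -- orthogonal complement setup
  haveI : Fact (finrank ℝ (EuclideanSpace ℝ (Fin 3)) = 2 + 1) :=
    ⟨by simp [finrank_euclideanSpace_fin]⟩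
  set B2 : OrthonormalBasis (Fin 2) ℝ ((ℝ ∙ n)ᗮ) :=
    OrthonormalBasis.fromOrthogonalSpanSingleton 2 hn0 with hB2
  have hmem : ∀ v, (D v)⁻¹ • u v - H • n ∈ (ℝ ∙ n)ᗮ := by
    intro v
    rw [Submodule.mem_orthogonal_singleton_iff_inner_right]
    rw [inner_sub_right, real_inner_smul_right, real_inner_smul_right,
      real_inner_self_eq_norm_sq, hn, real_inner_comm, hInner' v]
    rw [one_pow, mul_one, mul_comm H (D v), ← mul_assoc,
      inv_mul_cancel₀ (hDpos v).ne', one_mul, sub_self]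
  set q : V → EuclideanSpace ℝ (Fin 2) :=
    fun v => B2.repr ⟨R⁻¹ • ((D v)⁻¹ • u v - H • n),
      Submodule.smul_mem _ _ (hmem v)⟩ with hq_def
  refine ⟨q, ?_⟩
  intro v v' hvv'
  have hp := hpack (Sum.inl v) (Sum.inl v') (fun h => hvv' (Sum.inl.inj h))
  have hDne : D v ≠ 0 := (hDpos v).ne'
  have hDne' : D v' ≠ 0 := (hDpos v').ne'
  -- distance between q's
  have hsub : (R⁻¹ • ((D v)⁻¹ • u v - H • n)) - (R⁻¹ • ((D v')⁻¹ • u v' - H • n))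
      = R⁻¹ • ((D v)⁻¹ • u v - (D v')⁻¹ • u v') := by
    rw [← smul_sub]
    congr 1
    abel
  have hqd : dist (q v) (q v') = R⁻¹ * ‖(D v)⁻¹ • u v - (D v')⁻¹ • u v'‖ := by
    rw [hq_def]
    dsimp only
    rw [B2.repr.dist_map, Subtype.dist_eq]
    dsimp only
    rw [dist_eq_norm, hsub, norm_smul, Real.norm_eq_abs,
      abs_of_pos (inv_pos.mpr hRpos)]
  -- the key identity
  have huu : u v - u v' = p (Sum.inl v) - p (Sum.inl v') := by
    rw [hu_def]; dsimp only; abel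
  have hkey := key_ident (u v) (u v') (r (Sum.inl v)) (r (Sum.inl v')) (D v) (D v')
    (hDval v) (hDval v') hDne hDne'
  rw [huu, hrD v, hrD v',
    show ‖p (Sum.inl v) - p (Sum.inl v')‖ = dist (p (Sum.inl v)) (p (Sum.inl v'))
      from (dist_eq_norm _ _).symm] at hkey
  set N : ℝ := ‖(D v)⁻¹ • u v - (D v')⁻¹ • u v'‖ with hN_def
  have hNnn : 0 ≤ N := norm_nonneg _
  set S : ℝ := dist (p (Sum.inl v)) (p (Sum.inl v')) ^ 2
    - (r (Sum.inl v) + r (Sum.inl v')) ^ 2 with hS_def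
  have hS : 0 ≤ S := by
    have h1 : 0 ≤ r (Sum.inl v) + r (Sum.inl v') :=
      le_of_lt (add_pos (hrpos _) (hrpos _))
    have h2 := pow_le_pow_left₀ h1 hp.1 2
    rw [hS_def]
    linarith
  have hN2 : N ^ 2 = S / (D v * D v') + (2 * R) ^ 2 := by
    rw [hN_def, hS_def, hkey]
    ring
  have hfrac : 0 ≤ S / (D v * D v') :=
    div_nonneg hS (le_of_lt (mul_pos (hDpos v) (hDpos v')))
  constructor
  · -- 2 ≤ dist
    rw [hqd]
    have hNge : 2 * R ≤ N := by nlinarith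
    calc (2:ℝ) = R⁻¹ * (2 * R) := by field_simp
    _ ≤ R⁻¹ * N := by
      exact mul_le_mul_of_nonneg_left hNge (le_of_lt (inv_pos.mpr hRpos))
  · -- equality iff adjacency
    rw [hqd]
    have step1 : R⁻¹ * N = 2 ↔ N = 2 * R := by
      rw [inv_mul_eq_div, div_eq_iff hRpos.ne']
    have step2 : N = 2 * R ↔ N ^ 2 = (2 * R) ^ 2 :=
      my_sq_eq_iff hNnn (by positivity)
    have step3 : N ^ 2 = (2 * R) ^ 2 ↔ S = 0 := by
      rw [hN2]
      constructor
      · intro h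
        have h0 : S / (D v * D v') = 0 := by linarith
        rcases div_eq_zero_iff.mp h0 with h' | h'
        · exact h'
        · exact absurd h' (ne_of_gt (mul_pos (hDpos v) (hDpos v')))
      · intro h; rw [h]; simp
    have step4 : S = 0 ↔ dist (p (Sum.inl v)) (p (Sum.inl v'))
        = r (Sum.inl v) + r (Sum.inl v') := by
      have h1 : 0 ≤ r (Sum.inl v) + r (Sum.inl v') :=
        le_of_lt (add_pos (hrpos _) (hrpos _))
      rw [hS_def, sub_eq_zero]
      exact (my_sq_eq_iff dist_nonneg h1).symm
    rw [step1, step2, step3, step4]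
    exact hp.2


lemma backward_dir {V : Type*} [Fintype V] (G : SimpleGraph V) (h : IsPennyGraph G) :
    (∃ (p : V ⊕ Fin 2 → EuclideanSpace ℝ (Fin 3)) (r : V ⊕ Fin 2 → ℝ),
      IsSpherePacking 3 (joinK2 G) p r) := by
  obtain ⟨q, hq⟩ := h
  obtain ⟨C, hC⟩ := Finite.exists_le (fun v => |q v 0|)
  obtain ⟨a, b, W, D, ha, hb, hW, hD⟩ :
      ∃ (a b : V → ℝ) (W : ℝ) (D : V → ℝ), (∀ v, a v = q v 0 - W) ∧ (∀ v, b v = q v 1)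
        ∧ (W = max C 0 + 2) ∧ (∀ v, D v = a v ^ 2 + b v ^ 2 - 1) :=
    ⟨fun v => q v 0 - (max C 0 + 2), fun v => q v 1, max C 0 + 2,
      fun v => (q v 0 - (max C 0 + 2)) ^ 2 + (q v 1) ^ 2 - 1,
      fun _ => rfl, fun _ => rfl, rfl, fun _ => rfl⟩
  have hD3 : ∀ v, 3 ≤ D v := by
    intro v
    have h1 : |q v 0| ≤ C := hC v
    have h2 : a v ≤ -2 := by
      have h3 : q v 0 ≤ C := le_trans (le_abs_self _) h1
      have h4 : q v 0 ≤ max C 0 := le_trans h3 (le_max_left _ _)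
      rw [ha, hW]; linarith
    have h5 : 4 ≤ a v ^ 2 := by nlinarith
    rw [hD]; nlinarith [sq_nonneg (b v)]
  have hDpos : ∀ v, 0 < D v := fun v => lt_of_lt_of_le (by norm_num) (hD3 v)
  have hDne : ∀ v, D v ≠ 0 := fun v => (hDpos v).ne'
  refine ⟨fun x => match x with
    | Sum.inl v => (WithLp.equiv 2 (Fin 3 → ℝ)).symm ![W + a v / D v, b v / D v, 1]
    | Sum.inr i => (WithLp.equiv 2 (Fin 3 → ℝ)).symm ![W, 0, if i = 0 then 1/2 else 3/2],
    fun x => match x with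
    | Sum.inl v => 1 / D v
    | Sum.inr _ => 1 / 2, ?_, ?_⟩
  · rintro (v | i)
    · exact div_pos one_pos (hDpos v)
    · norm_num
  · have hq2 : ∀ v w : V, dist (q v) (q w) ^ 2
        = (q v 0 - q w 0) ^ 2 + (q v 1 - q w 1) ^ 2 := by
      intro v w
      rw [EuclideanSpace.dist_eq, Real.sq_sqrt (by positivity)]
      simp [Fin.sum_univ_two, Real.dist_eq, sq_abs]
    rintro (v | i) (w | j) hne <;> dsimp only
    · -- two pennies
      have hvw : v ≠ w := fun h => hne (by rw [h])
      obtain ⟨hge, hiff⟩ := hq v w hvw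
      have hd3 : dist ((WithLp.equiv 2 (Fin 3 → ℝ)).symm ![W + a v / D v, b v / D v, 1])
          ((WithLp.equiv 2 (Fin 3 → ℝ)).symm ![W + a w / D w, b w / D w, 1])
          = Real.sqrt ((a v / D v - a w / D w) ^ 2 + (b v / D v - b w / D w) ^ 2) := by
        rw [dist3]
        rw [show W + a v / D v - (W + a w / D w) = a v / D v - a w / D w from by ring,
          show (1:ℝ) - 1 = 0 from by ring]
        norm_num
      have hT : (a v / D v - a w / D w) ^ 2 + (b v / D v - b w / D w) ^ 2
          = (dist (q v) (q w) ^ 2 - 4) / (D v * D w) + (1 / D v + 1 / D w) ^ 2 := by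
        rw [hq2]
        have e1 : q v 0 - q w 0 = a v - a w := by rw [ha, ha]; ring
        have e2 : q v 1 - q w 1 = b v - b w := by rw [hb, hb]
        rw [e1, e2]
        exact penny_key _ _ _ _ _ _ (hD v) (hD w) (hDne v) (hDne w)
      have hsum : (0:ℝ) < 1 / D v + 1 / D w :=
        add_pos (div_pos one_pos (hDpos v)) (div_pos one_pos (hDpos w))
      constructor
      · rw [hd3, Real.le_sqrt hsum.le (by positivity), hT]
        have h4 : 4 ≤ dist (q v) (q w) ^ 2 := by nlinarith
        have h5 : 0 ≤ (dist (q v) (q w) ^ 2 - 4) / (D v * D w) :=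
          div_nonneg (by linarith) (le_of_lt (mul_pos (hDpos v) (hDpos w)))
        linarith
      · rw [hd3, my_sqrt_eq_iff (by positivity) hsum.le, hT]
        constructor
        · intro hcase
          have h0 : (dist (q v) (q w) ^ 2 - 4) / (D v * D w) = 0 := by linarith
          have h1 : dist (q v) (q w) ^ 2 - 4 = 0 := by
            rcases div_eq_zero_iff.mp h0 with h | h
            · exact h
            · exact absurd h (ne_of_gt (mul_pos (hDpos v) (hDpos w)))
          have h2 : dist (q v) (q w) = 2 := by nlinarith [dist_nonneg (x := q v) (y := q w)]
          exact hiff.mp h2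
        · intro hadj
          rw [hiff.mpr hadj]
          norm_num
    · -- penny vs base sphere
      have heq : dist ((WithLp.equiv 2 (Fin 3 → ℝ)).symm ![W + a v / D v, b v / D v, 1])
          ((WithLp.equiv 2 (Fin 3 → ℝ)).symm ![W, 0, if j = 0 then 1/2 else 3/2])
          = 1 / D v + 1 / 2 := by
        rw [dist3]
        rw [show W + a v / D v - W = a v / D v from by ring,
          show b v / D v - 0 = b v / D v from by ring]
        have hz : ((1:ℝ) - if j = 0 then 1/2 else 3/2) ^ 2 = (1/2 : ℝ)^2 := by
          fin_cases j <;> norm_num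
        rw [hz, my_sqrt_eq_iff (by positivity)
          (add_nonneg (le_of_lt (div_pos one_pos (hDpos v))) (by norm_num))]
        exact penny_base _ _ _ (hD v) (hDne v)
      refine ⟨heq.ge, ⟨fun _ => trivial, fun _ => heq⟩⟩
    · -- base sphere vs penny
      have heq : dist ((WithLp.equiv 2 (Fin 3 → ℝ)).symm ![W, 0, if i = 0 then 1/2 else 3/2])
          ((WithLp.equiv 2 (Fin 3 → ℝ)).symm ![W + a w / D w, b w / D w, 1])
          = 1 / 2 + 1 / D w := by
        rw [dist3]
        have hz : (((if i = 0 then 1/2 else 3/2) : ℝ) - 1) ^ 2 = (1/2 : ℝ)^2 := by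
          fin_cases i <;> norm_num
        rw [hz]
        rw [show ((W - (W + a w / D w))^2 + ((0:ℝ) - b w / D w)^2 + (1/2:ℝ)^2)
          = ((a w / D w)^2 + (b w / D w)^2 + (1/2:ℝ)^2) from by ring]
        rw [my_sqrt_eq_iff (by positivity)
          (add_nonneg (by norm_num) (le_of_lt (div_pos one_pos (hDpos w))))]
        rw [show ((1:ℝ)/2 + 1/D w)^2 = (1/D w + 1/2)^2 from by ring]
        exact penny_base _ _ _ (hD w) (hDne w)
      refine ⟨heq.ge, ⟨fun _ => trivial, fun _ => heq⟩⟩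
    · -- two base spheres
      have hij : i ≠ j := fun h => hne (by rw [h])
      have heq : dist ((WithLp.equiv 2 (Fin 3 → ℝ)).symm ![W, 0, if i = 0 then 1/2 else 3/2])
          ((WithLp.equiv 2 (Fin 3 → ℝ)).symm ![W, 0, if j = 0 then 1/2 else 3/2])
          = 1 / 2 + 1 / 2 := by
        rw [dist3]
        fin_cases i <;> fin_cases j <;>
          first
          | exact absurd rfl hij
          | (norm_num
             try rw [my_sqrt_eq_iff (by positivity) (by norm_num)]
             try ring)
      refine ⟨heq.ge, ⟨fun _ => hij, fun _ => heq⟩⟩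

end Helpers

/-- Kirkpatrick–Rote: `G ⊕ K₂` is the contact graph of a sphere packing iff `G` is a
penny graph. -/
theorem joinK2_packing_iff_penny {V : Type*} [Fintype V] (G : SimpleGraph V) :
    (∃ (p : V ⊕ Fin 2 → EuclideanSpace ℝ (Fin 3)) (r : V ⊕ Fin 2 → ℝ),
      IsSpherePacking 3 (joinK2 G) p r) ↔ IsPennyGraph G := by
  exact ⟨fun h => forward_dir G h, fun h => backward_dir G h⟩

end
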